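/- (A small model cannot unmask a noisy codeword.) Let ℓ, n, k, m ∈ ℕ with k ≤ n ≤ 2^ℓ, R = k/n, 0 ≤ s ≤ n, and t > 0. Let Q be uniformly distributed on 𝔽_{2^ℓ}ⁿ and let Z be any random variable jointly distributed with Q whose support has size at most 2^m. Let c be a uniform codeword of the Reed–Solomon code over 𝔽_{2^ℓ} with dimension k and block length n, and let ρ be the random-subset noise on s coordinates, with c and ρ independent of each other and of (Q, Z). Then with probability at least 1 − 2^{−t} over z ← Z, the statistical distance between the conditional distribution of c + Q + ρ given Z = z and the uniform distribution on 𝔽_{2^ℓ}ⁿ is at most 2^{(m + t)/2 − 1}·(1 − R)^s. -/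

import Mathlib

open Finset

/-- Statistical distance between two (mass functions of) distributions on a finite set. -/
noncomputable def SD {Ω : Type*} [Fintype Ω] (p q : Ω → ℝ) : ℝ :=
  (∑ ω, |p ω - q ω|) / 2

/-- Marginal of the second component of a joint distribution. -/
noncomputable def margZ {A B : Type*} [Fintype A] (p : A × B → ℝ) : B → ℝ :=
  fun b => ∑ a, p (a, b)

/-- Reed–Solomon encoding with dimension `k`, block length `n` and (distinct)
evaluation points `a : Fin n → F`:  `m ↦ (f_m(a₁), …, f_m(a_n))`. -/
def rsEnc {F : Type*} [Field F] (k n : ℕ) (a : Fin n → F) (m : Fin k → F) : Fin n → F :=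
  fun i => ∑ j : Fin k, m j * a i ^ (j : ℕ)

/-- Mass function of a uniform Reed–Solomon codeword (encoding of a uniform message). -/
noncomputable def encDist {F : Type*} [Field F] [Fintype F] [DecidableEq F]
    (k n : ℕ) (a : Fin n → F) : (Fin n → F) → ℝ :=
  fun w => ∑ m : Fin k → F,
    (1 / (Fintype.card F : ℝ) ^ k) * (if rsEnc k n a m = w then 1 else 0)

/-- Mass function of the random-subset noise on `s` coordinates: a uniform size-`s`
subset `S ⊆ {1,…,n}` gets independent uniform field elements, other coordinates are 0. -/
noncomputable def noiseDist {F : Type*} [Field F] [Fintype F] [DecidableEq F]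
    (n s : ℕ) : (Fin n → F) → ℝ :=
  fun w => ∑ S ∈ Finset.powersetCard s (Finset.univ : Finset (Fin n)), ∑ e : Fin n → F,
    (1 / (n.choose s : ℝ)) * (1 / (Fintype.card F : ℝ) ^ n) *
      (if (fun i => if i ∈ S then e i else 0) = w then 1 else 0)



namespace Unmask

noncomputable def sgn (u : ZMod 2) : ℝ := if u = 0 then 1 else -1

lemma zmod2_cases : ∀ u : ZMod 2, u = 0 ∨ u = 1 := by decide

lemma sgn_zero : sgn 0 = 1 := by simp [sgn]

lemma sgn_add (u v : ZMod 2) : sgn (u + v) = sgn u * sgn v := by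
  rcases zmod2_cases u with hu | hu <;> rcases zmod2_cases v with hv | hv <;>
    subst hu <;> subst hv <;> norm_num [sgn] <;> decide

lemma sgn_sub (u v : ZMod 2) : sgn (u - v) = sgn u * sgn v := by
  have : u - v = u + v := by
    rcases zmod2_cases u with hu | hu <;> rcases zmod2_cases v with hv | hv <;>
      subst hu <;> subst hv <;> decide
  rw [this, sgn_add]

lemma sgn_sum {ι : Type*} (s : Finset ι) (u : ι → ZMod 2) :
    sgn (∑ i ∈ s, u i) = ∏ i ∈ s, sgn (u i) := by
  classical
  induction s using Finset.cons_induction with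
  | empty => simp [sgn_zero]
  | cons a s ha ih => rw [Finset.sum_cons, Finset.prod_cons, sgn_add, ih]

variable {F : Type*} [Field F] [Fintype F] [DecidableEq F]

lemma sum_sgn_eq_zero (β : F →+ ZMod 2) (e0 : F) (h : β e0 = 1) :
    ∑ e : F, sgn (β e) = 0 := by
  have key : ∑ e : F, sgn (β e) = ∑ e : F, sgn (β (e + e0)) :=
    (Fintype.sum_equiv (Equiv.addRight e0) _ _ (fun e => rfl)).symm
  have h2 : ∀ e : F, sgn (β (e + e0)) = - sgn (β e) := by
    intro e
    rw [map_add, h, sgn_add]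
    simp [sgn]
  rw [Finset.sum_congr rfl (fun e _ => h2 e)] at key
  rw [Finset.sum_neg_distrib] at key
  linarith

lemma sum_sgn_mul (β : F →+ ZMod 2) (e0 : F) (h : β e0 = 1) (t : F) :
    ∑ e : F, sgn (β (e * t)) = if t = 0 then (Fintype.card F : ℝ) else 0 := by
  rcases eq_or_ne t 0 with ht | ht
  · subst ht; simp [sgn_zero]
  · rw [if_neg ht]
    have key : ∑ e : F, sgn (β (e * t)) = ∑ e : F, sgn (β e) :=
      Fintype.sum_equiv (Equiv.mulRight₀ t ht) _ _ (fun e => rfl)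
    rw [key, sum_sgn_eq_zero β e0 h]

/-- character sum over `Fin N → F`. -/
lemma char_sum (β : F →+ ZMod 2) (e0 : F) (h : β e0 = 1) {N : ℕ} (y : Fin N → F) :
    ∑ x : Fin N → F, sgn (β (∑ i, x i * y i)) =
      if y = 0 then ((Fintype.card F : ℝ)) ^ N else 0 := by
  have step : ∀ x : Fin N → F, sgn (β (∑ i, x i * y i)) = ∏ i, sgn (β (x i * y i)) := by
    intro x; rw [map_sum, sgn_sum]
  rw [Finset.sum_congr rfl (fun x _ => step x)]
  have := Finset.prod_univ_sum (fun _ : Fin N => (Finset.univ : Finset F))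
    (fun i e => sgn (β (e * y i)))
  rw [Fintype.piFinset_univ] at this
  rw [← this]
  have : ∀ i : Fin N, ∑ e : F, sgn (β (e * y i)) =
      if y i = 0 then (Fintype.card F : ℝ) else 0 := fun i => sum_sgn_mul β e0 h (y i)
  rw [Finset.prod_congr rfl (fun i _ => this i)]
  rcases eq_or_ne y 0 with hy | hy
  · subst hy; simp
  · rw [if_neg hy]
    obtain ⟨i0, hi0⟩ : ∃ i, y i ≠ 0 := by
      by_contra hc; push_neg at hc; exact hy (funext hc)
    exact Finset.prod_eq_zero (Finset.mem_univ i0) (if_neg hi0)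

/-- Fourier transform. -/
noncomputable def ft (β : F →+ ZMod 2) {N : ℕ} (f : (Fin N → F) → ℝ) (y : Fin N → F) : ℝ :=
  ∑ x, f x * sgn (β (∑ i, x i * y i))

lemma parseval (β : F →+ ZMod 2) (e0 : F) (h : β e0 = 1) {N : ℕ} (f : (Fin N → F) → ℝ) :
    ∑ y : Fin N → F, (ft β f y) ^ 2 = (Fintype.card F : ℝ) ^ N * ∑ x, (f x) ^ 2 := by
  have expand : ∀ y : Fin N → F, (ft β f y) ^ 2 =
      ∑ x : Fin N → F, ∑ x' : Fin N → F,
        f x * f x' * sgn (β (∑ i, (x i - x' i) * y i)) := by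
    intro y
    rw [ft, sq, Finset.sum_mul_sum]
    refine Finset.sum_congr rfl fun x _ => Finset.sum_congr rfl fun x' _ => ?_
    have : sgn (β (∑ i, x i * y i)) * sgn (β (∑ i, x' i * y i)) =
        sgn (β (∑ i, (x i - x' i) * y i)) := by
      rw [← sgn_sub, ← map_sub, ← Finset.sum_sub_distrib]
      congr 1
      refine congrArg β (Finset.sum_congr rfl fun i _ => ?_)
      ring
    calc f x * sgn (β (∑ i, x i * y i)) * (f x' * sgn (β (∑ i, x' i * y i)))
        = f x * f x' * (sgn (β (∑ i, x i * y i)) * sgn (β (∑ i, x' i * y i))) := by ring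
      _ = f x * f x' * sgn (β (∑ i, (x i - x' i) * y i)) := by rw [this]
  rw [Finset.sum_congr rfl (fun y _ => expand y)]
  rw [Finset.sum_comm]
  have swap2 : ∀ x : Fin N → F,
      (∑ y : Fin N → F, ∑ x' : Fin N → F, f x * f x' * sgn (β (∑ i, (x i - x' i) * y i)))
      = ∑ x' : Fin N → F, f x * f x' * ∑ y : Fin N → F, sgn (β (∑ i, (x i - x' i) * y i)) := by
    intro x
    rw [Finset.sum_comm]
    exact Finset.sum_congr rfl fun x' _ => by rw [Finset.mul_sum]
  rw [Finset.sum_congr rfl (fun x _ => swap2 x)]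
  have inner : ∀ x x' : Fin N → F,
      ∑ y : Fin N → F, sgn (β (∑ i, (x i - x' i) * y i)) =
        if x - x' = 0 then ((Fintype.card F : ℝ)) ^ N else 0 := by
    intro x x'
    have h1 : ∑ y : Fin N → F, sgn (β (∑ i, (x i - x' i) * y i))
        = ∑ y : Fin N → F, sgn (β (∑ i, y i * (x - x') i)) := by
      refine Finset.sum_congr rfl fun y _ => ?_
      congr 1
      exact congrArg β (Finset.sum_congr rfl fun i _ => by rw [Pi.sub_apply, mul_comm])
    rw [h1, char_sum β e0 h (x - x')]
  rw [Finset.sum_congr rfl fun x (_ : x ∈ Finset.univ) =>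
    Finset.sum_congr rfl fun x' (_ : x' ∈ Finset.univ) => by rw [inner x x']]
  have last : ∀ x : Fin N → F,
      ∑ x' : Fin N → F, f x * f x' * (if x - x' = 0 then ((Fintype.card F : ℝ)) ^ N else 0)
        = (Fintype.card F : ℝ) ^ N * (f x) ^ 2 := by
    intro x
    rw [Finset.sum_eq_single x]
    · rw [sub_self, if_pos rfl]; ring
    · intro b _ hb
      rw [if_neg (fun hc => hb (sub_eq_zero.mp hc).symm), mul_zero]
    · intro hx; exact absurd (Finset.mem_univ x) hx
  rw [Finset.sum_congr rfl fun x _ => last x, ← Finset.mul_sum]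


lemma sgn_pair_add (β : F →+ ZMod 2) {N : ℕ} (x u y : Fin N → F) :
    sgn (β (∑ i, (u + x) i * y i)) =
      sgn (β (∑ i, u i * y i)) * sgn (β (∑ i, x i * y i)) := by
  rw [← sgn_add, ← map_add, ← Finset.sum_add_distrib]
  congr 2
  refine Finset.sum_congr rfl fun i _ => ?_
  rw [Pi.add_apply]; ring

lemma ft_conv (β : F →+ ZMod 2) {N : ℕ} (f g : (Fin N → F) → ℝ) (y : Fin N → F) :
    ft β (fun w => ∑ x, f x * g (w - x)) y = ft β f y * ft β g y := by
  unfold ft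
  have step1 : ∑ w : Fin N → F, (∑ x, f x * g (w - x)) * sgn (β (∑ i, w i * y i))
      = ∑ x : Fin N → F, ∑ w : Fin N → F, f x * (g (w - x) * sgn (β (∑ i, w i * y i))) := by
    rw [Finset.sum_comm]
    refine Finset.sum_congr rfl fun w _ => ?_
    rw [Finset.sum_mul]
    exact Finset.sum_congr rfl fun x _ => by ring
  rw [step1]
  have step2 : ∀ x : Fin N → F,
      ∑ w : Fin N → F, g (w - x) * sgn (β (∑ i, w i * y i))
        = (∑ u : Fin N → F, g u * sgn (β (∑ i, u i * y i))) * sgn (β (∑ i, x i * y i)) := by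
    intro x
    have := Fintype.sum_equiv (Equiv.addRight x)
      (fun u : Fin N → F => g u * sgn (β (∑ i, (u + x) i * y i)))
      (fun w : Fin N → F => g (w - x) * sgn (β (∑ i, w i * y i)))
      (fun u => by simp only [Equiv.coe_addRight, add_sub_cancel_right])
    rw [← this, Finset.sum_mul]
    refine Finset.sum_congr rfl fun u _ => ?_
    show g u * sgn (β (∑ i, (u + x) i * y i)) = _
    rw [sgn_pair_add β x u y]; ring
  calc ∑ x : Fin N → F, ∑ w : Fin N → F, f x * (g (w - x) * sgn (β (∑ i, w i * y i)))
      = ∑ x : Fin N → F, f x * sgn (β (∑ i, x i * y i)) *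
          (∑ u : Fin N → F, g u * sgn (β (∑ i, u i * y i))) := by
        refine Finset.sum_congr rfl fun x _ => ?_
        rw [← Finset.mul_sum, step2 x]; ring
    _ = _ := by rw [← Finset.sum_mul]

lemma ft_push {A : Type*} (β : F →+ ZMod 2) {N : ℕ} (t : Finset A) (c : A → ℝ)
    (g : A → (Fin N → F)) (y : Fin N → F) :
    ft β (fun w => ∑ α ∈ t, c α * (if g α = w then 1 else 0)) y
      = ∑ α ∈ t, c α * sgn (β (∑ i, (g α) i * y i)) := by
  unfold ft
  have e1 : ∀ w : Fin N → F,
      (∑ α ∈ t, c α * (if g α = w then 1 else 0)) * sgn (β (∑ i, w i * y i))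
        = ∑ α ∈ t, c α * (if g α = w then 1 else 0) * sgn (β (∑ i, w i * y i)) :=
    fun w => Finset.sum_mul _ _ _
  rw [Finset.sum_congr rfl fun w _ => e1 w, Finset.sum_comm]
  refine Finset.sum_congr rfl fun α _ => ?_
  rw [Finset.sum_eq_single (g α)]
  · rw [if_pos rfl, mul_one]
  · intro w _ hw; rw [if_neg (Ne.symm hw), mul_zero, zero_mul]
  · intro hw; exact absurd (Finset.mem_univ _) hw

lemma ft_encDist (β : F →+ ZMod 2) (e0 : F) (h : β e0 = 1) (k n : ℕ) (a : Fin n → F)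
    (y : Fin n → F) :
    ft β (encDist k n a) y =
      if (∀ j : Fin k, ∑ i, y i * a i ^ (j : ℕ) = 0) then 1 else 0 := by
  have hcard : (0:ℝ) < (Fintype.card F : ℝ) := by exact_mod_cast Fintype.card_pos
  have base := ft_push (A := Fin k → F) β Finset.univ
    (fun _ => (1 / (Fintype.card F : ℝ) ^ k)) (rsEnc k n a) y
  have : encDist k n a = fun w => ∑ m : Fin k → F,
      (1 / (Fintype.card F : ℝ) ^ k) * (if rsEnc k n a m = w then 1 else 0) := rfl
  rw [this, base]
  have swap : ∀ m : Fin k → F, ∑ i, rsEnc k n a m i * y i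
      = ∑ j : Fin k, m j * (∑ i, y i * a i ^ (j : ℕ)) := by
    intro m
    unfold rsEnc
    have e1 : ∀ i : Fin n, (∑ j : Fin k, m j * a i ^ (j : ℕ)) * y i
        = ∑ j : Fin k, m j * a i ^ (j : ℕ) * y i := fun i => Finset.sum_mul _ _ _
    rw [Finset.sum_congr rfl fun i _ => e1 i, Finset.sum_comm]
    refine Finset.sum_congr rfl fun j _ => ?_
    rw [Finset.mul_sum]
    exact Finset.sum_congr rfl fun i _ => by ring
  rw [Finset.sum_congr rfl fun m _ => by rw [swap m], ← Finset.mul_sum,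
    char_sum β e0 h (fun j : Fin k => ∑ i, y i * a i ^ (j : ℕ))]
  by_cases hv : (fun j : Fin k => ∑ i, y i * a i ^ (j : ℕ)) = (0 : Fin k → F)
  · rw [if_pos hv, if_pos]
    · field_simp
    · intro j
      have := congrFun hv j
      simpa using this
  · rw [if_neg hv, if_neg, mul_zero]
    intro hc
    exact hv (funext fun j => by simpa using hc j)

lemma ft_noiseDist (β : F →+ ZMod 2) (e0 : F) (h : β e0 = 1) (n s : ℕ)
    (y : Fin n → F) :
    ft β (noiseDist n s) y =
      (((Finset.univ.filter (fun i : Fin n => y i = 0)).card.choose s : ℝ)) /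
        (n.choose s : ℝ) := by
  classical
  have hcard : (0:ℝ) < (Fintype.card F : ℝ) := by exact_mod_cast Fintype.card_pos
  -- rewrite noiseDist as a single sum over a product finset
  have hrw : noiseDist n s = fun w => ∑ α ∈ (Finset.powersetCard s (Finset.univ : Finset (Fin n))) ×ˢ (Finset.univ : Finset (Fin n → F)),
      (fun _ : Finset (Fin n) × (Fin n → F) => (1 / (n.choose s : ℝ)) * (1 / (Fintype.card F : ℝ) ^ n)) α *
        (if (fun i => if i ∈ α.1 then α.2 i else 0) = w then 1 else 0) := by
    funext w
    rw [Finset.sum_product]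
    rfl
  rw [hrw, ft_push, Finset.sum_product]
  -- inner sum over e for fixed S
  have inner : ∀ S ∈ Finset.powersetCard s (Finset.univ : Finset (Fin n)),
      ∑ e : Fin n → F, (1 / (n.choose s : ℝ)) * (1 / (Fintype.card F : ℝ) ^ n) *
          sgn (β (∑ i, (if i ∈ S then e i else 0) * y i))
        = if (∀ i ∈ S, y i = 0) then (1 / (n.choose s : ℝ)) else 0 := by
    intro S _
    have expand : ∀ e : Fin n → F, sgn (β (∑ i, (if i ∈ S then e i else 0) * y i))
        = ∏ i, sgn (β ((if i ∈ S then e i else 0) * y i)) := by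
      intro e; rw [map_sum, sgn_sum]
    rw [← Finset.mul_sum, Finset.sum_congr rfl fun e _ => expand e]
    have prodsum := Finset.prod_univ_sum (fun _ : Fin n => (Finset.univ : Finset F))
      (fun i u => sgn (β ((if i ∈ S then u else 0) * y i)))
    rw [Fintype.piFinset_univ] at prodsum
    rw [← prodsum]
    have factor : ∀ i : Fin n, (∑ u : F, sgn (β ((if i ∈ S then u else 0) * y i)))
        = if i ∈ S then (if y i = 0 then (Fintype.card F : ℝ) else 0) else (Fintype.card F : ℝ) := by
      intro i
      by_cases hiS : i ∈ S
      · rw [if_pos hiS]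
        have : ∀ u : F, sgn (β ((if i ∈ S then u else 0) * y i)) = sgn (β (u * y i)) := by
          intro u; rw [if_pos hiS]
        rw [Finset.sum_congr rfl fun u _ => this u, sum_sgn_mul β e0 h (y i)]
      · rw [if_neg hiS]
        have : ∀ u : F, sgn (β ((if i ∈ S then u else 0) * y i)) = 1 := by
          intro u; rw [if_neg hiS, zero_mul, map_zero, sgn_zero]
        rw [Finset.sum_congr rfl fun u _ => this u, Finset.sum_const, Finset.card_univ,
          nsmul_eq_mul, mul_one]
    rw [Finset.prod_congr rfl fun i _ => factor i]
    by_cases hS : ∀ i ∈ S, y i = 0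
    · rw [if_pos hS]
      have : ∀ i : Fin n, (if i ∈ S then (if y i = 0 then (Fintype.card F : ℝ) else 0)
          else (Fintype.card F : ℝ)) = (Fintype.card F : ℝ) := by
        intro i
        by_cases hiS : i ∈ S
        · rw [if_pos hiS, if_pos (hS i hiS)]
        · rw [if_neg hiS]
      rw [Finset.prod_congr rfl fun i _ => this i, Finset.prod_const, Finset.card_univ,
        Fintype.card_fin, mul_assoc, one_div_mul_cancel (ne_of_gt (pow_pos hcard n)), mul_one]
    · rw [if_neg hS]
      push_neg at hS
      obtain ⟨i0, hi0S, hi0⟩ := hS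
      rw [Finset.prod_eq_zero (Finset.mem_univ i0), mul_zero]
      rw [if_pos hi0S, if_neg hi0]
  rw [Finset.sum_congr rfl inner]
  rw [Finset.sum_ite, Finset.sum_const_zero, add_zero, Finset.sum_const, nsmul_eq_mul]
  have setEq : (Finset.powersetCard s (Finset.univ : Finset (Fin n))).filter
      (fun S => ∀ i ∈ S, y i = 0)
      = Finset.powersetCard s (Finset.univ.filter (fun i : Fin n => y i = 0)) := by
    ext T
    simp only [Finset.mem_filter, Finset.mem_powersetCard]
    constructor
    · rintro ⟨⟨-, hTc⟩, hTy⟩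
      exact ⟨fun i hi => Finset.mem_filter.mpr ⟨Finset.mem_univ i, hTy i hi⟩, hTc⟩
    · rintro ⟨hTsub, hTc⟩
      exact ⟨⟨Finset.subset_univ T, hTc⟩, fun i hi => (Finset.mem_filter.mp (hTsub hi)).2⟩
  rw [setEq, Finset.card_powersetCard]
  rw [mul_one_div]

lemma weight_ge_of_dual {k n : ℕ} (hkn : k ≤ n) (a : Fin n → F) (ha : Function.Injective a)
    (y : Fin n → F) (hy : y ≠ 0)
    (hdual : ∀ j : Fin k, ∑ i, y i * a i ^ (j : ℕ) = 0) :
    k + 1 ≤ (Finset.univ.filter (fun i => y i ≠ 0)).card := by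
  classical
  by_contra hcon
  push_neg at hcon
  have hWk : (Finset.univ.filter (fun i => y i ≠ 0)).card ≤ k := Nat.lt_succ_iff.mp hcon
  obtain ⟨S', hsub, hcard⟩ := Finset.exists_superset_card_eq hWk (by
    simpa [Fintype.card_fin] using hkn)
  set e : Fin k ≃o {x // x ∈ S'} := S'.orderIsoOfFin hcard with he
  set M : Matrix (Fin k) (Fin k) F := Matrix.of (fun j i => a (e i) ^ (j : ℕ)) with hM
  have hmv : M.mulVec (fun i => y (e i)) = 0 := by
    funext j
    have hsum : ∑ i : Fin k, a (e i) ^ (j : ℕ) * y (e i)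
        = ∑ i' ∈ S', y i' * a i' ^ (j : ℕ) := by
      rw [← Finset.sum_attach S' (fun i' => y i' * a i' ^ (j : ℕ))]
      refine Fintype.sum_equiv e.toEquiv _ _ (fun i => mul_comm _ _)
    have hfull : ∑ i' ∈ S', y i' * a i' ^ (j : ℕ) = ∑ i', y i' * a i' ^ (j : ℕ) := by
      refine Finset.sum_subset (Finset.subset_univ S') ?_
      intro i' _ hi'
      have : y i' = 0 := by
        by_contra hne
        exact hi' (hsub (Finset.mem_filter.mpr ⟨Finset.mem_univ i', hne⟩))
      rw [this, zero_mul]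
    show ∑ i : Fin k, M j i * y (e i) = 0
    calc ∑ i : Fin k, M j i * y (e i) = ∑ i' ∈ S', y i' * a i' ^ (j : ℕ) := hsum
      _ = ∑ i', y i' * a i' ^ (j : ℕ) := hfull
      _ = 0 := hdual j
  have hdet : M.det ≠ 0 := by
    have hMt : M = (Matrix.vandermonde (fun i : Fin k => a (e i))).transpose := by
      ext j i; rfl
    rw [hMt, Matrix.det_transpose, Matrix.det_vandermonde_ne_zero_iff]
    intro i1 i2 h12
    exact e.injective (Subtype.coe_injective (ha h12))
  have hz := Matrix.eq_zero_of_mulVec_eq_zero hdet hmv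
  obtain ⟨i0, hi0⟩ : ∃ i0, y i0 ≠ 0 := by
    by_contra hc; push_neg at hc; exact hy (funext hc)
  have hi0S : i0 ∈ S' := hsub (Finset.mem_filter.mpr ⟨Finset.mem_univ i0, hi0⟩)
  have : y i0 = 0 := by
    have := congrFun hz (e.symm ⟨i0, hi0S⟩)
    simpa using this
  exact hi0 this

lemma choose_mul_pow_le : ∀ (s n w : ℕ), w ≤ n →
    (n - w).choose s * n ^ s ≤ n.choose s * (n - w) ^ s := by
  intro s
  induction s with
  | zero => intro n w _; simp
  | succ s ih =>
    intro n w hwn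
    rcases Nat.eq_zero_or_pos w with hw0 | hwpos
    · subst hw0; simp
    rcases Nat.lt_or_ge (n - w) (s + 1) with hlt | hge
    · rw [Nat.choose_eq_zero_of_lt hlt, zero_mul]
      exact Nat.zero_le _
    have hnw1 : 1 ≤ n - w := le_trans (Nat.succ_le_succ (Nat.zero_le s)) hge
    have hn1 : 1 ≤ n := le_trans hnw1 (Nat.sub_le n w)
    have hwn1 : w ≤ n - 1 := by omega
    have hn2 : 2 ≤ n := by omega
    -- key sublemma
    have key : (n - w - 1).choose s * n ^ s ≤ (n - 1).choose s * (n - w) ^ s := by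
      have ihh := ih (n - 1) w hwn1
      have hsub : n - 1 - w = n - w - 1 := by omega
      rw [hsub] at ihh
      -- (n-w-1)*n ≤ (n-1)*(n-w)
      have hmul : (n - w - 1) * n ≤ (n - 1) * (n - w) := by
        zify [hnw1, hn1, hwn, hwn1]
        nlinarith [hwpos, hn1]
      have hpow : ((n - w - 1) * n) ^ s ≤ ((n - 1) * (n - w)) ^ s :=
        Nat.pow_le_pow_left hmul s
      have chain : (n - w - 1).choose s * n ^ s * (n - 1) ^ s
          ≤ (n - 1).choose s * (n - w) ^ s * (n - 1) ^ s := by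
        calc (n - w - 1).choose s * n ^ s * (n - 1) ^ s
            = (n - w - 1).choose s * ((n - 1) ^ s * n ^ s) := by ring
          _ ≤ (n - 1).choose s * (n - 1 - w) ^ s * n ^ s := by
              rw [hsub, ← mul_assoc]
              exact Nat.mul_le_mul_right _ ihh
          _ = (n - 1).choose s * ((n - w - 1) * n) ^ s := by
              rw [hsub, mul_assoc, ← mul_pow]
          _ ≤ (n - 1).choose s * ((n - 1) * (n - w)) ^ s := Nat.mul_le_mul_left _ hpow
          _ = (n - 1).choose s * (n - w) ^ s * (n - 1) ^ s := by
              rw [mul_pow]; ring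
      have hpos : 0 < (n - 1) ^ s := Nat.pow_pos (by omega)
      exact Nat.le_of_mul_le_mul_right chain hpos
    have hm1 : n - w - 1 + 1 = n - w := by omega
    have hm2 : n - 1 + 1 = n := by omega
    have id1 : (n - w) * (n - w - 1).choose s = (n - w).choose (s + 1) * (s + 1) := by
      have := Nat.add_one_mul_choose_eq (n - w - 1) s
      rwa [hm1] at this
    have id2 : n * (n - 1).choose s = n.choose (s + 1) * (s + 1) := by
      have := Nat.add_one_mul_choose_eq (n - 1) s
      rwa [hm2] at this
    have hs1pos : 0 < s + 1 := Nat.succ_pos s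
    refine Nat.le_of_mul_le_mul_right ?_ hs1pos
    calc (n - w).choose (s + 1) * n ^ (s + 1) * (s + 1)
        = ((n - w) * (n - w - 1).choose s) * n ^ (s + 1) := by
            rw [mul_right_comm, ← id1]
      _ = (n - w - 1).choose s * n ^ s * ((n - w) * n) := by rw [pow_succ]; ring
      _ ≤ (n - 1).choose s * (n - w) ^ s * ((n - w) * n) := Nat.mul_le_mul_right _ key
      _ = (n * (n - 1).choose s) * (n - w) ^ (s + 1) := by rw [pow_succ]; ring
      _ = n.choose (s + 1) * (n - w) ^ (s + 1) * (s + 1) := by rw [id2]; ring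

lemma noise_ft_bound {n k s w : ℕ} (hs : s ≤ n) (hkn : k ≤ n) (hw : k + 1 ≤ w)
    (hwn : w ≤ n) :
    ((n - w).choose s : ℝ) / (n.choose s : ℝ) ≤ (1 - (k : ℝ) / n) ^ s := by
  have hn1 : 1 ≤ n := le_trans (le_trans (Nat.le_add_left 1 k) hw) hwn
  have hnR : (0:ℝ) < n := by exact_mod_cast hn1
  have hCpos : (0:ℝ) < (n.choose s : ℝ) := by exact_mod_cast Nat.choose_pos hs
  have h1 : (n - w).choose s ≤ (n - (k+1)).choose s := Nat.choose_le_choose s (by omega)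
  have h2 : (n - (k+1)).choose s * n ^ s ≤ n.choose s * (n - (k+1)) ^ s :=
    choose_mul_pow_le s n (k+1) (by omega)
  have h3 : n.choose s * (n - (k+1)) ^ s ≤ n.choose s * (n - k) ^ s :=
    Nat.mul_le_mul_left _ (Nat.pow_le_pow_left (by omega) s)
  have hchain : ((n - w).choose s : ℝ) * (n:ℝ) ^ s ≤ (n.choose s : ℝ) * ((n - k : ℕ) : ℝ) ^ s := by
    exact_mod_cast le_trans (Nat.mul_le_mul_right _ h1) (le_trans h2 h3)
  have hnk : ((n - k : ℕ) : ℝ) = (n:ℝ) - k := by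
    rw [Nat.cast_sub hkn]
  rw [hnk] at hchain
  have hb : (1 - (k:ℝ)/n) = ((n:ℝ) - k)/n := by field_simp
  rw [div_le_iff₀ hCpos, hb, div_pow, div_mul_eq_mul_div, le_div_iff₀ (pow_pos hnR s)]
  linarith [hchain]

lemma per_z_bound {n k s : ℕ} (hkn : k ≤ n) (hs : s ≤ n)
    (β : F →+ ZMod 2) (e0 : F) (hβ : β e0 = 1)
    (a : Fin n → F) (ha : Function.Injective a)
    (D : (Fin n → F) → ℝ) (hD0 : ∀ q, 0 ≤ D q) (hD1 : ∑ q, D q = 1)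
    (ε : ℝ) (hε : 0 < ε) (hDmax : ∀ q, D q ≤ 1 / ((Fintype.card F : ℝ) ^ n * ε)) :
    SD (fun w => ∑ c0, ∑ r0, encDist k n a c0 * noiseDist n s r0 * D (w - c0 - r0))
       (fun _ => 1 / (Fintype.card F : ℝ) ^ n)
      ≤ (1 / 2) * (1 - (k:ℝ)/n) ^ s * (1 / Real.sqrt ε) := by
  classical
  set V : ℝ := (Fintype.card F : ℝ) ^ n with hVdef
  have hcardF : (0:ℝ) < (Fintype.card F : ℝ) := by exact_mod_cast Fintype.card_pos
  have hV : (0:ℝ) < V := pow_pos hcardF n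
  have hGcard : ((Fintype.card (Fin n → F) : ℝ)) = V := by
    rw [Fintype.card_fun, Fintype.card_fin]; push_cast; rfl
  set P : (Fin n → F) → ℝ :=
    fun w => ∑ c0, ∑ r0, encDist k n a c0 * noiseDist n s r0 * D (w - c0 - r0) with hPdef
  set U : (Fin n → F) → ℝ := fun _ => 1 / V with hUdef
  have hRnn : (0:ℝ) ≤ 1 - (k:ℝ)/n := by
    rcases Nat.eq_zero_or_pos n with hn0 | hnpos
    · subst hn0; simp
    · have : (k:ℝ)/n ≤ 1 := by
        rw [div_le_one (by exact_mod_cast hnpos)]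
        exact_mod_cast hkn
      linarith
  -- convolution structure
  have hconv : ∀ y, ft β P y =
      ft β (encDist k n a) y * (ft β (noiseDist n s) y * ft β D y) := by
    intro y
    set g : (Fin n → F) → ℝ := fun u => ∑ r0, noiseDist n s r0 * D (u - r0) with hgdef
    have hPg : P = fun w => ∑ c0, encDist k n a c0 * g (w - c0) := by
      funext w
      refine Finset.sum_congr rfl fun c0 _ => ?_
      rw [Finset.mul_sum]
      exact Finset.sum_congr rfl fun r0 _ => by ring
    rw [hPg, ft_conv, ft_conv]
  -- transform of uniform
  have hftU : ∀ y, ft β U y = if y = 0 then 1 else 0 := by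
    intro y
    unfold ft
    rw [← Finset.mul_sum, char_sum β e0 hβ y]
    rcases eq_or_ne y 0 with hy | hy
    · rw [if_pos hy, if_pos hy, ← hVdef, one_div, inv_mul_cancel₀ (ne_of_gt hV)]
    · rw [if_neg hy, if_neg hy, mul_zero]
  have hCpos : (0:ℝ) < (n.choose s : ℝ) := by exact_mod_cast Nat.choose_pos hs
  -- transform of P at 0
  have hftP0 : ft β P 0 = 1 := by
    rw [hconv 0, ft_encDist β e0 hβ, ft_noiseDist β e0 hβ]
    have h1 : (∀ j : Fin k, ∑ i, (0 : Fin n → F) i * a i ^ (j:ℕ) = 0) := by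
      intro j; simp
    rw [if_pos h1]
    have h2 : (Finset.univ.filter (fun i : Fin n => (0 : Fin n → F) i = 0)) = Finset.univ := by
      refine Finset.filter_true_of_mem fun i _ => rfl
    rw [h2, Finset.card_univ, Fintype.card_fin, div_self (ne_of_gt hCpos)]
    have h3 : ft β D 0 = 1 := by
      unfold ft
      have : ∀ x : Fin n → F, D x * sgn (β (∑ i, x i * (0 : Fin n → F) i)) = D x := by
        intro x
        have : (∑ i, x i * (0 : Fin n → F) i) = 0 := by simp
        rw [this, map_zero, sgn_zero, mul_one]
      rw [Finset.sum_congr rfl fun x _ => this x, hD1]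
    rw [h3]; ring
  -- Cauchy–Schwarz
  have hCS : (∑ w, |P w - U w|) ^ 2 ≤ V * ∑ w, (P w - U w) ^ 2 := by
    have := Finset.sum_mul_sq_le_sq_mul_sq Finset.univ
      (fun _ : Fin n → F => (1:ℝ)) (fun w => |P w - U w|)
    simp only [one_mul, one_pow] at this
    calc (∑ w, |P w - U w|) ^ 2 ≤ (∑ _w : Fin n → F, (1:ℝ)) * ∑ w, |P w - U w| ^ 2 := this
      _ = V * ∑ w, (P w - U w) ^ 2 := by
          rw [Finset.sum_const, Finset.card_univ, nsmul_eq_mul, mul_one, hGcard]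
          congr 1
          exact Finset.sum_congr rfl fun w _ => by rw [sq_abs]
  -- Parseval for P - U
  have hsub : ∀ y, ft β (fun w => P w - U w) y = ft β P y - ft β U y := by
    intro y
    unfold ft
    rw [← Finset.sum_sub_distrib]
    exact Finset.sum_congr rfl fun x _ => by rw [sub_mul]
  have hpars : ∑ y : Fin n → F, (ft β (fun w => P w - U w) y) ^ 2
      = V * ∑ w, (P w - U w) ^ 2 := parseval β e0 hβ _
  have hzero : ft β (fun w => P w - U w) 0 = 0 := by
    rw [hsub, hftP0, hftU, if_pos rfl, sub_self]
  have hkey : V * ∑ w, (P w - U w) ^ 2 = ∑ y ∈ Finset.univ.erase 0, (ft β P y) ^ 2 := by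
    rw [← hpars]
    calc ∑ y : Fin n → F, (ft β (fun w => P w - U w) y) ^ 2
        = (ft β (fun w => P w - U w) 0) ^ 2
          + ∑ y ∈ Finset.univ.erase 0, (ft β (fun w => P w - U w) y) ^ 2 :=
        (Finset.add_sum_erase Finset.univ _ (Finset.mem_univ 0)).symm
      _ = ∑ y ∈ Finset.univ.erase 0, (ft β P y) ^ 2 := by
          rw [hzero]
          rw [zero_pow (by norm_num : (2:ℕ) ≠ 0), zero_add]
          refine Finset.sum_congr rfl fun y hy => ?_
          rw [hsub, hftU, if_neg (Finset.ne_of_mem_erase hy), sub_zero]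
  -- second moment of D
  have hDsum : ∑ q, (D q) ^ 2 ≤ 1 / (V * ε) := by
    have hle : ∀ q, (D q) ^ 2 ≤ (1 / (V * ε)) * D q := by
      intro q
      rw [sq]
      exact mul_le_mul_of_nonneg_right (by rw [hVdef] at *; exact hDmax q) (hD0 q)
    calc ∑ q, (D q) ^ 2 ≤ ∑ q, (1 / (V * ε)) * D q := Finset.sum_le_sum fun q _ => hle q
      _ = 1 / (V * ε) := by rw [← Finset.mul_sum, hD1, mul_one]
  have hDtail : ∑ y : Fin n → F, (ft β D y) ^ 2 ≤ 1 / ε := by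
    rw [parseval β e0 hβ D]
    calc V * ∑ q, (D q) ^ 2 ≤ V * (1 / (V * ε)) :=
        mul_le_mul_of_nonneg_left hDsum (le_of_lt hV)
      _ = 1 / ε := by field_simp
  -- pointwise bound for y ≠ 0
  have hpt : ∀ y ∈ Finset.univ.erase (0 : Fin n → F),
      (ft β P y) ^ 2 ≤ ((1 - (k:ℝ)/n) ^ s) ^ 2 * (ft β D y) ^ 2 := by
    intro y hy
    have hyne : y ≠ 0 := Finset.ne_of_mem_erase hy
    rw [hconv y, ft_encDist β e0 hβ, ft_noiseDist β e0 hβ]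
    by_cases hcond : ∀ j : Fin k, ∑ i, y i * a i ^ (j:ℕ) = 0
    · rw [if_pos hcond, one_mul]
      set zc := (Finset.univ.filter (fun i : Fin n => y i = 0)).card with hzc
      set wt := (Finset.univ.filter (fun i : Fin n => y i ≠ 0)).card with hwt
      have hwtk : k + 1 ≤ wt := weight_ge_of_dual hkn a ha y hyne hcond
      have hsplitc : zc + wt = n := by
        have := Finset.card_filter_add_card_filter_not
          (s := (Finset.univ : Finset (Fin n))) (p := fun i : Fin n => y i = 0)
        rw [Finset.card_univ, Fintype.card_fin] at this
        rw [hzc, hwt]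
        convert this using 2
      have hwtn : wt ≤ n := by omega
      have hzceq : zc = n - wt := by omega
      have hcb : (zc.choose s : ℝ) / (n.choose s : ℝ) ≤ (1 - (k:ℝ)/n) ^ s := by
        rw [hzceq]
        exact noise_ft_bound hs hkn hwtk hwtn
      have h0c : (0:ℝ) ≤ (zc.choose s : ℝ) / (n.choose s : ℝ) :=
        div_nonneg (Nat.cast_nonneg _) (Nat.cast_nonneg _)
      rw [mul_pow]
      exact mul_le_mul_of_nonneg_right (pow_le_pow_left₀ h0c hcb 2) (sq_nonneg _)
    · rw [if_neg hcond, zero_mul, zero_pow (by norm_num : (2:ℕ) ≠ 0)]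
      positivity
  have htail : ∑ y ∈ Finset.univ.erase 0, (ft β P y) ^ 2
      ≤ ((1 - (k:ℝ)/n) ^ s) ^ 2 * (1 / ε) := by
    calc ∑ y ∈ Finset.univ.erase 0, (ft β P y) ^ 2
        ≤ ∑ y ∈ Finset.univ.erase 0, ((1 - (k:ℝ)/n) ^ s) ^ 2 * (ft β D y) ^ 2 :=
          Finset.sum_le_sum hpt
      _ = ((1 - (k:ℝ)/n) ^ s) ^ 2 * ∑ y ∈ Finset.univ.erase 0, (ft β D y) ^ 2 := by
          rw [Finset.mul_sum]
      _ ≤ ((1 - (k:ℝ)/n) ^ s) ^ 2 * ∑ y : Fin n → F, (ft β D y) ^ 2 := by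
          refine mul_le_mul_of_nonneg_left ?_ (sq_nonneg _)
          exact Finset.sum_le_sum_of_subset_of_nonneg (Finset.erase_subset _ _)
            (fun y _ _ => sq_nonneg _)
      _ ≤ ((1 - (k:ℝ)/n) ^ s) ^ 2 * (1 / ε) :=
          mul_le_mul_of_nonneg_left hDtail (sq_nonneg _)
  -- final assembly
  have habs2 : (∑ w, |P w - U w|) ^ 2 ≤ ((1 - (k:ℝ)/n) ^ s) ^ 2 * (1 / ε) := by
    calc (∑ w, |P w - U w|) ^ 2 ≤ V * ∑ w, (P w - U w) ^ 2 := hCS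
      _ = ∑ y ∈ Finset.univ.erase 0, (ft β P y) ^ 2 := hkey
      _ ≤ ((1 - (k:ℝ)/n) ^ s) ^ 2 * (1 / ε) := htail
  have habsnn : (0:ℝ) ≤ ∑ w, |P w - U w| :=
    Finset.sum_nonneg fun w _ => abs_nonneg _
  have hBnn : (0:ℝ) ≤ (1 - (k:ℝ)/n) ^ s := pow_nonneg hRnn s
  have habs : ∑ w, |P w - U w| ≤ (1 - (k:ℝ)/n) ^ s * (1 / Real.sqrt ε) := by
    have h1 : ∑ w, |P w - U w| = Real.sqrt ((∑ w, |P w - U w|) ^ 2) :=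
      (Real.sqrt_sq habsnn).symm
    rw [h1]
    calc Real.sqrt ((∑ w, |P w - U w|) ^ 2)
        ≤ Real.sqrt (((1 - (k:ℝ)/n) ^ s) ^ 2 * (1 / ε)) := Real.sqrt_le_sqrt habs2
      _ = (1 - (k:ℝ)/n) ^ s * (1 / Real.sqrt ε) := by
          rw [Real.sqrt_mul (sq_nonneg _), Real.sqrt_sq hBnn, one_div, one_div,
            Real.sqrt_inv]
  show (∑ w, |P w - U w|) / 2 ≤ (1 / 2) * (1 - (k:ℝ)/n) ^ s * (1 / Real.sqrt ε)
  linarith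

lemma exists_beta (ℓ : ℕ) (hFcard : Fintype.card F = 2 ^ ℓ) :
    ∃ β : F →+ ZMod 2, ∃ e0 : F, β e0 = 1 := by
  obtain ⟨p, hc⟩ := CharP.exists F
  haveI := hc
  have hp : p.Prime := CharP.char_is_prime F p
  obtain ⟨n', hp', hcard⟩ := FiniteField.card F p
  have hdvd : p ∣ 2 ^ ℓ := by
    rw [← hFcard, hcard]
    exact dvd_pow_self p (by exact_mod_cast n'.ne_zero)
  have hp2 : p = 2 :=
    (Nat.prime_dvd_prime_iff_eq hp' Nat.prime_two).mp (hp'.dvd_of_dvd_pow hdvd)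
  subst hp2
  haveI : CharP F 2 := hc
  letI : Module (ZMod 2) F := AddCommGroup.zmodModule (fun x => by
    rw [two_smul]; exact CharTwo.add_self_eq_zero x)
  let b := Module.Basis.ofVectorSpace (ZMod 2) F
  obtain ⟨i0⟩ := b.index_nonempty
  refine ⟨(b.coord i0).toAddMonoidHom, b i0, ?_⟩
  show b.coord i0 (b i0) = 1
  rw [Module.Basis.coord_apply, Module.Basis.repr_self]
  simp

end Unmask

/-- **A small model cannot unmask a noisy codeword.**  Let `Q` be uniform on `𝔽_{2^ℓ}ⁿ`,
`Z` jointly distributed with `Q` with support of size at most `2^m`, and let `c` be a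
uniform RS codeword and `ρ` the random-subset noise on `s` coordinates, independent of
`(Q, Z)`.  Then with probability at least `1 - 2^(-t)` over `z ← Z`, the conditional
distribution of `c + Q + ρ` given `Z = z` is `2^((m+t)/2-1)·(1-R)^s`-close to uniform. -/
theorem small_model_cannot_unmask
    (ℓ n k m : ℕ) (hkn : k ≤ n) (hn : n ≤ 2 ^ ℓ) (s : ℕ) (hs : s ≤ n) (t : ℝ) (ht : 0 < t)
    (F : Type*) [Field F] [Fintype F] [DecidableEq F] (hF : Fintype.card F = 2 ^ ℓ)
    (a : Fin n → F) (ha : Function.Injective a)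
    (B : Type*) [Fintype B]
    (p : (Fin n → F) × B → ℝ)
    (hp0 : ∀ w, 0 ≤ p w) (hp1 : ∑ w, p w = 1)
    (hQunif : ∀ q : Fin n → F, ∑ b, p (q, b) = 1 / 2 ^ (n * ℓ))
    (hsupp : ((Finset.univ : Finset B).filter (fun b => margZ p b ≠ 0)).card ≤ 2 ^ m) :
    1 - (2 : ℝ) ^ (-t) ≤
      ∑ z ∈ (Finset.univ : Finset B).filter (fun z =>
          SD (fun w : Fin n → F => ∑ c0 : Fin n → F, ∑ r0 : Fin n → F,
                encDist k n a c0 * noiseDist n s r0 * (p (w - c0 - r0, z) / margZ p z))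
              (fun _ : Fin n → F => 1 / 2 ^ (n * ℓ)) ≤
            (2 : ℝ) ^ (((m : ℝ) + t) / 2 - 1) * (1 - (k : ℝ) / n) ^ s),
        margZ p z := by
  
  classical
  obtain ⟨β, e0, hβ⟩ := Unmask.exists_beta ℓ hF
  have hV2 : ((Fintype.card F : ℝ)) ^ n = 2 ^ (n * ℓ) := by
    rw [hF]; push_cast; rw [← pow_mul, mul_comm ℓ n]
  set εg : ℝ := (2:ℝ) ^ (-((m:ℝ) + t)) with hεg
  have hεpos : 0 < εg := Real.rpow_pos_of_pos two_pos _
  have hm0 : ∀ z, 0 ≤ margZ p z := fun z => Finset.sum_nonneg fun q _ => hp0 (q, z)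
  have htot : ∑ z : B, margZ p z = 1 := by
    calc ∑ z : B, margZ p z = ∑ z : B, ∑ q, p (q, z) := rfl
      _ = ∑ q, ∑ z : B, p (q, z) := Finset.sum_comm
      _ = ∑ w : (Fin n → F) × B, p w := (Fintype.sum_prod_type p).symm
      _ = 1 := hp1
  set Good : Finset B := Finset.univ.filter (fun z => εg ≤ margZ p z) with hGood
  have hSD : ∀ z ∈ Good,
      SD (fun w : Fin n → F => ∑ c0 : Fin n → F, ∑ r0 : Fin n → F,
            encDist k n a c0 * noiseDist n s r0 * (p (w - c0 - r0, z) / margZ p z))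
          (fun _ : Fin n → F => 1 / 2 ^ (n * ℓ)) ≤
        (2 : ℝ) ^ (((m : ℝ) + t) / 2 - 1) * (1 - (k : ℝ) / n) ^ s := by
    intro z hz
    have hzε : εg ≤ margZ p z := (Finset.mem_filter.mp hz).2
    have hzpos : 0 < margZ p z := lt_of_lt_of_le hεpos hzε
    set D : (Fin n → F) → ℝ := fun q => p (q, z) / margZ p z with hD
    have hD0 : ∀ q, 0 ≤ D q := fun q => div_nonneg (hp0 _) (le_of_lt hzpos)
    have hD1 : ∑ q, D q = 1 := by
      rw [hD]
      rw [← Finset.sum_div]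
      exact div_self (ne_of_gt hzpos)
    have hpmax : ∀ q : Fin n → F, p (q, z) ≤ 1 / 2 ^ (n * ℓ) := by
      intro q
      rw [← hQunif q]
      exact Finset.single_le_sum (fun b _ => hp0 (q, b)) (Finset.mem_univ z)
    have hDmax : ∀ q, D q ≤ 1 / ((Fintype.card F : ℝ) ^ n * εg) := by
      intro q
      have h1 : D q ≤ (1 / 2 ^ (n * ℓ)) / margZ p z :=
        (div_le_div_iff_of_pos_right hzpos).mpr (hpmax q)
      have h2 : ((1:ℝ) / 2 ^ (n * ℓ)) / margZ p z = 1 / (2 ^ (n * ℓ) * margZ p z) := by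
        rw [div_div]
      have h3 : (1:ℝ) / (2 ^ (n * ℓ) * margZ p z) ≤ 1 / (2 ^ (n * ℓ) * εg) := by
        refine one_div_le_one_div_of_le ?_ ?_
        · positivity
        · exact mul_le_mul_of_nonneg_left hzε (by positivity)
      rw [hV2]
      exact le_trans h1 (le_trans (le_of_eq h2) h3)
    have hper := Unmask.per_z_bound hkn hs β e0 hβ a ha D hD0 hD1 εg hεpos hDmax
    have harg : (fun _ : Fin n → F => (1:ℝ) / 2 ^ (n * ℓ))
        = (fun _ : Fin n → F => 1 / (Fintype.card F : ℝ) ^ n) := by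
      funext _; rw [hV2]
    rw [harg]
    refine le_trans hper (le_of_eq ?_)
    have hsq : Real.sqrt εg = (2:ℝ) ^ (-(((m:ℝ) + t) / 2)) := by
      rw [hεg, Real.sqrt_eq_rpow, ← Real.rpow_mul (le_of_lt two_pos)]
      congr 1; ring
    have hinv : 1 / (2:ℝ) ^ (-(((m:ℝ) + t) / 2)) = (2:ℝ) ^ (((m:ℝ) + t) / 2) := by
      rw [Real.rpow_neg (le_of_lt two_pos), one_div, inv_inv]
    have hsplit2 : (2:ℝ) ^ (((m:ℝ) + t) / 2 - 1)
        = (2:ℝ) ^ (((m:ℝ) + t) / 2) * (2:ℝ) ^ (-(1:ℝ)) := by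
      rw [sub_eq_add_neg, Real.rpow_add two_pos]
    rw [hsq, hinv, hsplit2, Real.rpow_neg_one]
    ring
  have hBadsum : ∑ z ∈ Finset.univ.filter (fun z => ¬ εg ≤ margZ p z), margZ p z
      ≤ (2:ℝ) ^ m * εg := by
    have hdrop : ∑ z ∈ Finset.univ.filter (fun z => ¬ εg ≤ margZ p z), margZ p z
        = ∑ z ∈ (Finset.univ.filter (fun z => ¬ εg ≤ margZ p z)).filter
            (fun z => margZ p z ≠ 0), margZ p z :=
      (Finset.sum_filter_ne_zero _).symm
    rw [hdrop]
    have hcard : ((Finset.univ.filter (fun z => ¬ εg ≤ margZ p z)).filter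
        (fun z => margZ p z ≠ 0)).card ≤ 2 ^ m := by
      refine le_trans (Finset.card_le_card ?_) hsupp
      intro z hz
      simp only [Finset.mem_filter] at hz ⊢
      exact ⟨Finset.mem_univ z, hz.2⟩
    have hbound : ∀ z ∈ (Finset.univ.filter (fun z => ¬ εg ≤ margZ p z)).filter
        (fun z => margZ p z ≠ 0), margZ p z ≤ εg := by
      intro z hz
      have := (Finset.mem_filter.mp (Finset.mem_filter.mp hz).1).2
      exact le_of_lt (not_le.mp this)
    calc ∑ z ∈ (Finset.univ.filter (fun z => ¬ εg ≤ margZ p z)).filter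
          (fun z => margZ p z ≠ 0), margZ p z
        ≤ ((Finset.univ.filter (fun z => ¬ εg ≤ margZ p z)).filter
            (fun z => margZ p z ≠ 0)).card • εg := Finset.sum_le_card_nsmul _ _ _ hbound
      _ ≤ (2 ^ m : ℕ) • εg := nsmul_le_nsmul_left (le_of_lt hεpos) hcard
      _ = (2:ℝ) ^ m * εg := by rw [nsmul_eq_mul]; push_cast; ring
  have hε2 : (2:ℝ) ^ m * εg = (2:ℝ) ^ (-t) := by
    rw [hεg, ← Real.rpow_natCast 2 m, ← Real.rpow_add two_pos]
    congr 1; ring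
  have hGoodsum : 1 - (2:ℝ) ^ (-t) ≤ ∑ z ∈ Good, margZ p z := by
    have hsplit := Finset.sum_filter_add_sum_filter_not Finset.univ
      (fun z => εg ≤ margZ p z) (margZ p)
    rw [htot] at hsplit
    have : ∑ z ∈ Finset.univ.filter (fun z => ¬ εg ≤ margZ p z), margZ p z ≤ (2:ℝ) ^ (-t) := by
      rw [← hε2]; exact hBadsum
    rw [hGood]
    linarith
  refine le_trans hGoodsum (Finset.sum_le_sum_of_subset_of_nonneg ?_ (fun z _ _ => hm0 z))
  intro z hz
  exact Finset.mem_filter.mpr ⟨Finset.mem_univ z, hSD z hz⟩
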